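/- Let N₁, N₂, N₃, N₄ be the symmetric 5×5 integer matrices N₁ = [[3,−1,−1,−1,−1],[−1,4,−1,−1,0],[−1,−1,3,1,−1],[−1,−1,1,3,−1],[−1,0,−1,−1,4]], N₂ = [[6,−2,−2,−2,−2],[−2,6,−1,−1,0],[−2,−1,4,1,−1],[−2,−1,1,4,−1],[−2,0,−1,−1,6]], N₃ = [[2,0,−1,−1,−1],[0,2,−1,−1,0],[−1,−1,2,1,0],[−1,−1,1,2,0],[−1,0,0,0,2]], N₄ = [[5,−1,−2,−2,−2],[−1,4,−1,−1,0],[−2,−1,3,1,0],[−2,−1,1,3,0],[−2,0,0,0,4]]. Then N₁ + N₄ = N₂ + N₃, the real linear span of {N₁, N₂, N₃, N₄} has dimension exactly 3, and for each i the matrix Nᵢ is not a linear combination with nonnegative real coefficients of the other three. (Hence the cone ∑ᵢ ℝ≥0·Nᵢ is a 3-dimensional non-simplicial polyhedral cone.) -/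

import Mathlib

open Matrix

/-- The four generators of a second `3`-dimensional non-simplicial cone in the second
Voronoi decomposition for `g = 5`. -/
def voronoiCone2 : Fin 4 → Matrix (Fin 5) (Fin 5) ℝ :=
  ![!![3, -1, -1, -1, -1;
      -1, 4, -1, -1, 0;
      -1, -1, 3, 1, -1;
      -1, -1, 1, 3, -1;
      -1, 0, -1, -1, 4],
    !![6, -2, -2, -2, -2;
      -2, 6, -1, -1, 0;
      -2, -1, 4, 1, -1;
      -2, -1, 1, 4, -1;
      -2, 0, -1, -1, 6],
    !![2, 0, -1, -1, -1;
      0, 2, -1, -1, 0;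
      -1, -1, 2, 1, 0;
      -1, -1, 1, 2, 0;
      -1, 0, 0, 0, 2],
    !![5, -1, -2, -2, -2;
      -1, 4, -1, -1, 0;
      -2, -1, 3, 1, 0;
      -2, -1, 1, 3, 0;
      -2, 0, 0, 0, 4]]

/-- The matrices `N₁, N₂, N₃, N₄` satisfy `N₁ + N₄ = N₂ + N₃`, their real span has
dimension exactly `3`, and none of them is a nonnegative real linear combination of
the other three: the cone `∑ᵢ ℝ₊ Nᵢ` is a `3`-dimensional non-simplicial polyhedral
cone. -/
theorem voronoiCone2_non_simplicial :
    voronoiCone2 0 + voronoiCone2 3 = voronoiCone2 1 + voronoiCone2 2 ∧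
    Module.finrank ℝ (Submodule.span ℝ (Set.range voronoiCone2)) = 3 ∧
    ∀ i : Fin 4, ¬ ∃ c : Fin 4 → ℝ, (∀ j, 0 ≤ c j) ∧
      voronoiCone2 i = ∑ j ∈ Finset.univ.erase i, c j • voronoiCone2 j := by
  have hadd : voronoiCone2 0 + voronoiCone2 3 = voronoiCone2 1 + voronoiCone2 2 := by
    simp only [voronoiCone2, Matrix.cons_val]
    ext i j
    fin_cases i <;> fin_cases j <;> norm_num [voronoiCone2, Matrix.cons_val]
  have h3 : voronoiCone2 3 = voronoiCone2 1 + voronoiCone2 2 - voronoiCone2 0 := by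
    rw [eq_sub_iff_add_eq, add_comm]; exact hadd
  refine ⟨hadd, ?_, ?_⟩
  · have hw : LinearIndependent ℝ ![voronoiCone2 0, voronoiCone2 1, voronoiCone2 2] := by
      rw [Fintype.linearIndependent_iff]
      intro g hg
      have e1 := congrArg (fun M => M 0 0) hg
      have e2 := congrArg (fun M => M 0 1) hg
      have e3 := congrArg (fun M => M 1 1) hg
      simp only [Fin.sum_univ_three, Matrix.add_apply, Matrix.smul_apply,
        Matrix.zero_apply, Matrix.cons_val_zero, Matrix.cons_val_one,
        Matrix.head_cons, Matrix.cons_val, voronoiCone2, smul_eq_mul] at e1 e2 e3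
      norm_num at e1 e2 e3
      intro i
      fin_cases i <;> simp <;> linarith
    have hspan : Submodule.span ℝ (Set.range voronoiCone2) =
        Submodule.span ℝ (Set.range ![voronoiCone2 0, voronoiCone2 1, voronoiCone2 2]) := by
      apply le_antisymm <;> rw [Submodule.span_le] <;> rintro x ⟨i, rfl⟩
      · fin_cases i
        · exact Submodule.subset_span ⟨0, rfl⟩
        · exact Submodule.subset_span ⟨1, rfl⟩
        · exact Submodule.subset_span ⟨2, rfl⟩
        · show voronoiCone2 3 ∈ _
          rw [h3]
          exact Submodule.sub_mem _
            (Submodule.add_mem _ (Submodule.subset_span ⟨1, rfl⟩)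
              (Submodule.subset_span ⟨2, rfl⟩))
            (Submodule.subset_span ⟨0, rfl⟩)
      · fin_cases i
        · exact Submodule.subset_span ⟨0, rfl⟩
        · exact Submodule.subset_span ⟨1, rfl⟩
        · exact Submodule.subset_span ⟨2, rfl⟩
    rw [hspan, finrank_span_eq_card hw, Fintype.card_fin]
  · intro i
    rintro ⟨c, hc, heq⟩
    rw [Finset.sum_erase_eq_sub (Finset.mem_univ i)] at heq
    fin_cases i
    · replace heq : voronoiCone2 0 =
          ∑ x : Fin 4, c x • voronoiCone2 x - c 0 • voronoiCone2 0 := heq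
      have e1 := congrArg (fun M => M 0 0) heq
      have e2 := congrArg (fun M => M 0 1) heq
      have e3 := congrArg (fun M => M 1 1) heq
      simp only [Fin.sum_univ_four, Matrix.sub_apply, Matrix.add_apply,
        Matrix.smul_apply, Matrix.cons_val_zero, Matrix.cons_val_one,
        Matrix.head_cons, Matrix.cons_val, voronoiCone2, smul_eq_mul] at e1 e2 e3
      norm_num at e1 e2 e3
      linarith [hc 0, hc 1, hc 2, hc 3]
    · replace heq : voronoiCone2 1 =
          ∑ x : Fin 4, c x • voronoiCone2 x - c 1 • voronoiCone2 1 := heq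
      have e1 := congrArg (fun M => M 0 0) heq
      have e2 := congrArg (fun M => M 0 1) heq
      have e3 := congrArg (fun M => M 1 1) heq
      simp only [Fin.sum_univ_four, Matrix.sub_apply, Matrix.add_apply,
        Matrix.smul_apply, Matrix.cons_val_zero, Matrix.cons_val_one,
        Matrix.head_cons, Matrix.cons_val, voronoiCone2, smul_eq_mul] at e1 e2 e3
      norm_num at e1 e2 e3
      linarith [hc 0, hc 1, hc 2, hc 3]
    · replace heq : voronoiCone2 2 =
          ∑ x : Fin 4, c x • voronoiCone2 x - c 2 • voronoiCone2 2 := heq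
      have e1 := congrArg (fun M => M 0 0) heq
      have e2 := congrArg (fun M => M 0 1) heq
      have e3 := congrArg (fun M => M 1 1) heq
      simp only [Fin.sum_univ_four, Matrix.sub_apply, Matrix.add_apply,
        Matrix.smul_apply, Matrix.cons_val_zero, Matrix.cons_val_one,
        Matrix.head_cons, Matrix.cons_val, voronoiCone2, smul_eq_mul] at e1 e2 e3
      norm_num at e1 e2 e3
      linarith [hc 0, hc 1, hc 2, hc 3]
    · replace heq : voronoiCone2 3 =
          ∑ x : Fin 4, c x • voronoiCone2 x - c 3 • voronoiCone2 3 := heq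
      have e1 := congrArg (fun M => M 0 0) heq
      have e2 := congrArg (fun M => M 0 1) heq
      have e3 := congrArg (fun M => M 1 1) heq
      simp only [Fin.sum_univ_four, Matrix.sub_apply, Matrix.add_apply,
        Matrix.smul_apply, Matrix.cons_val_zero, Matrix.cons_val_one,
        Matrix.head_cons, Matrix.cons_val, voronoiCone2, smul_eq_mul] at e1 e2 e3
      norm_num at e1 e2 e3
      linarith [hc 0, hc 1, hc 2, hc 3]
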